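/- Let p, q, t ≥ 1 be integers, let G be a (theta, K_t)-free graph, and let (a,S,ℒ) be a (2^q·p + 2q, (2^q·p + 2q)²·t³ + q)-palanquin in G. Then there exist S1 ⊆ S with |S1| = p and ℒ1 ⊆ ℒ with |ℒ1| = q such that for every L ∈ ℒ1, no two vertices in S1 have a common neighbor in L, and either every x ∈ S1 is L-bad, or every x ∈ S1 is L-ugly. -/

import Mathlib

open SimpleGraph

universe u v

/-- `G` contains `H` as an induced subgraph: there is a graph embedding of `H` into `G`. -/
def ContainsInduced {V : Type u} {W : Type v} (G : SimpleGraph V) (H : SimpleGraph W) : Prop :=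
  Nonempty (H ↪g G)

/-- `G` has a hole (an induced cycle on at least four vertices) on `n` vertices. -/
def HasHole {V : Type u} (G : SimpleGraph V) (n : ℕ) : Prop :=
  4 ≤ n ∧ ContainsInduced G (cycleGraph n)

/-- `G` is chordal: it has no hole. -/
def Chordal {V : Type u} (G : SimpleGraph V) : Prop :=
  ∀ n : ℕ, ¬ HasHole G n

/-- `G` is even-hole-free: it has no hole on an even number of vertices. -/
def EvenHoleFree {V : Type u} (G : SimpleGraph V) : Prop :=
  ∀ n : ℕ, Even n → ¬ HasHole G n

/-- A tree decomposition of `G`: a tree `T` together with bags indexed by the nodes of `T`,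
covering all vertices and edges of `G`, such that for every vertex the set of nodes whose bag
contains it induces a connected (hence nonempty) subgraph of `T`. -/
structure TreeDecomp {V : Type u} (G : SimpleGraph V) where
  ι : Type u
  T : SimpleGraph ι
  isTree : T.IsTree
  bag : ι → Set V
  mem_bag : ∀ v : V, ∃ i, v ∈ bag i
  edge_bag : ∀ ⦃x y : V⦄, G.Adj x y → ∃ i, x ∈ bag i ∧ y ∈ bag i
  conn : ∀ v : V, (T.induce {i | v ∈ bag i}).Connected

/-- `G` has treewidth at most `w`. -/
def TreewidthLe {V : Type u} (G : SimpleGraph V) (w : ℕ) : Prop :=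
  ∃ D : TreeDecomp G, ∀ i, (D.bag i).ncard ≤ w + 1

/-- The cone over `F`: add one new vertex adjacent to all vertices of `F`. -/
def coneGraph {α : Type u} (F : SimpleGraph α) : SimpleGraph (Option α) where
  Adj x y :=
    match x, y with
    | some a, some b => F.Adj a b
    | some _, none => True
    | none, some _ => True
    | none, none => False
  symm := by
    constructor
    rintro (_ | a) (_ | b) h
    · exact h
    · trivial
    · trivial
    · exact F.adj_symm h
  loopless := by
    constructor
    rintro (_ | a) h
    · exact h
    · exact F.irrefl h

/-- The diamond: `K₄` minus an edge. -/
def diamondGraph : SimpleGraph (Fin 4) :=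
  (⊤ : SimpleGraph (Fin 4)).deleteEdges {s(0, 1)}
/-- An induced path in `G` from `x` to `y`, given as an embedding of a path graph whose first
vertex is `x` and whose last vertex is `y`. -/
structure IPath {V : Type u} (G : SimpleGraph V) (x y : V) where
  n : ℕ
  pos : 0 < n
  f : pathGraph n ↪g G
  hx : f ⟨0, pos⟩ = x
  hy : f ⟨n - 1, Nat.sub_lt pos Nat.one_pos⟩ = y

namespace IPath

variable {V : Type u} {G : SimpleGraph V} {x y : V}

/-- The vertex set of the path. -/
def support (P : IPath G x y) : Set V := Set.range P.f

/-- The interior of the path: its vertices other than the two ends. -/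
def interior (P : IPath G x y) : Set V :=
  {v | ∃ i : Fin P.n, 0 < (i : ℕ) ∧ (i : ℕ) < P.n - 1 ∧ P.f i = v}

/-- The length (number of edges) of the path. -/
def length (P : IPath G x y) : ℕ := P.n - 1

end IPath

/-- An induced path in `G` (with unspecified ends). -/
structure IndPath {V : Type u} (G : SimpleGraph V) where
  n : ℕ
  pos : 0 < n
  f : pathGraph n ↪g G

namespace IndPath

variable {V : Type u} {G : SimpleGraph V}

/-- The vertex set of the path. -/
def support (P : IndPath G) : Set V := Set.range P.f

/-- The first vertex of the path. -/
def first (P : IndPath G) : V := P.f ⟨0, P.pos⟩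

/-- The last vertex of the path. -/
def last (P : IndPath G) : V := P.f ⟨P.n - 1, Nat.sub_lt P.pos Nat.one_pos⟩

end IndPath

/-- The set of neighbors of `v` lying in the set `H` (i.e. the neighbors of `v` in the
subgraph of `G` induced by `H`, for `v` possibly outside `H`). -/
def NbrsIn {V : Type u} (G : SimpleGraph V) (H : Set V) (v : V) : Set V :=
  H ∩ G.neighborSet v

/-- `v` is `H`-good: it has exactly one neighbor in `H`. -/
def GoodFor {V : Type u} (G : SimpleGraph V) (H : Set V) (v : V) : Prop :=
  (NbrsIn G H v).ncard = 1

/-- `v` is `H`-bad: its set of neighbors in `H` is a clique with at least two vertices. -/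
def BadFor {V : Type u} (G : SimpleGraph V) (H : Set V) (v : V) : Prop :=
  G.IsClique (NbrsIn G H v) ∧ 2 ≤ (NbrsIn G H v).ncard

/-- `v` is `H`-ugly: its set of neighbors in `H` is not a clique. -/
def UglyFor {V : Type u} (G : SimpleGraph V) (H : Set V) (v : V) : Prop :=
  ¬ G.IsClique (NbrsIn G H v)

/-- `A` is anticomplete to `B`: there is no edge of `G` with one end in `A` and one in `B`. -/
def Anticomplete {V : Type u} (G : SimpleGraph V) (A B : Set V) : Prop :=
  ∀ a ∈ A, ∀ b ∈ B, ¬ G.Adj a b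

/-- The data of a theta with ends `a, b` and paths `P₁, P₂, P₃`: the ends are distinct and
non-adjacent, each path has length at least two, and the interiors of the paths are pairwise
disjoint and pairwise anticomplete. -/
def ThetaWitness {V : Type u} (G : SimpleGraph V) (a b : V)
    (P₁ P₂ P₃ : IPath G a b) : Prop :=
  a ≠ b ∧ ¬ G.Adj a b ∧
  2 ≤ P₁.length ∧ 2 ≤ P₂.length ∧ 2 ≤ P₃.length ∧
  Disjoint P₁.interior P₂.interior ∧ Disjoint P₁.interior P₃.interior ∧
  Disjoint P₂.interior P₃.interior ∧
  Anticomplete G P₁.interior P₂.interior ∧ Anticomplete G P₁.interior P₃.interior ∧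
  Anticomplete G P₂.interior P₃.interior

/-- There is a theta in `G`. -/
def HasTheta {V : Type u} (G : SimpleGraph V) : Prop :=
  ∃ (a b : V) (P₁ P₂ P₃ : IPath G a b), ThetaWitness G a b P₁ P₂ P₃

/-- The data of a prism with triangles `a₁a₂a₃`, `b₁b₂b₃` and paths `P₁, P₂, P₃`, where `Pᵢ`
has ends `aᵢ, bᵢ`, the paths are pairwise disjoint, and for `i ≠ j` the only edges between
`Pᵢ` and `Pⱼ` are `aᵢaⱼ` and `bᵢbⱼ`. -/
def PrismWitness {V : Type u} (G : SimpleGraph V) (a₁ a₂ a₃ b₁ b₂ b₃ : V)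
    (P₁ : IPath G a₁ b₁) (P₂ : IPath G a₂ b₂) (P₃ : IPath G a₃ b₃) : Prop :=
  G.Adj a₁ a₂ ∧ G.Adj a₁ a₃ ∧ G.Adj a₂ a₃ ∧
  G.Adj b₁ b₂ ∧ G.Adj b₁ b₃ ∧ G.Adj b₂ b₃ ∧
  Disjoint P₁.support P₂.support ∧ Disjoint P₁.support P₃.support ∧
  Disjoint P₂.support P₃.support ∧
  (∀ u ∈ P₁.support, ∀ v_ ∈ P₂.support, G.Adj u v_ → (u = a₁ ∧ v_ = a₂) ∨ (u = b₁ ∧ v_ = b₂)) ∧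
  (∀ u ∈ P₁.support, ∀ v_ ∈ P₃.support, G.Adj u v_ → (u = a₁ ∧ v_ = a₃) ∨ (u = b₁ ∧ v_ = b₃)) ∧
  (∀ u ∈ P₂.support, ∀ v_ ∈ P₃.support, G.Adj u v_ → (u = a₂ ∧ v_ = a₃) ∨ (u = b₂ ∧ v_ = b₃))

/-- There is a prism in `G`. -/
def HasPrism {V : Type u} (G : SimpleGraph V) : Prop :=
  ∃ (a₁ a₂ a₃ b₁ b₂ b₃ : V) (P₁ : IPath G a₁ b₁) (P₂ : IPath G a₂ b₂) (P₃ : IPath G a₃ b₃),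
    PrismWitness G a₁ a₂ a₃ b₁ b₂ b₃ P₁ P₂ P₃

/-- The data of a wheel: a hole (given by an embedding `f` of a cycle on `n ≥ 4` vertices)
together with a vertex `v` outside the hole having at least three neighbors in it. -/
def WheelWitness {V : Type u} (G : SimpleGraph V) (n : ℕ) (f : cycleGraph n ↪g G)
    (v : V) : Prop :=
  4 ≤ n ∧ v ∉ Set.range f ∧ 3 ≤ (NbrsIn G (Set.range f) v).ncard

/-- There is an even wheel in `G`: a wheel whose center has an even number of neighbors
in the hole. -/
def HasEvenWheel {V : Type u} (G : SimpleGraph V) : Prop :=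
  ∃ (n : ℕ) (f : cycleGraph n ↪g G) (v : V),
    WheelWitness G n f v ∧ Even ((NbrsIn G (Set.range f) v).ncard)

/-- `G` belongs to the class `𝓔` of (C₄, theta, prism, even wheel)-free graphs. -/
def MemE {V : Type u} (G : SimpleGraph V) : Prop :=
  ¬ ContainsInduced G (cycleGraph 4) ∧ ¬ HasTheta G ∧ ¬ HasPrism G ∧ ¬ HasEvenWheel G
/-- The whole graph `G` is a theta. -/
def IsThetaGraph {V : Type u} (G : SimpleGraph V) : Prop :=
  ∃ (a b : V) (P₁ P₂ P₃ : IPath G a b), ThetaWitness G a b P₁ P₂ P₃ ∧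
    ∀ u : V, u ∈ P₁.support ∪ P₂.support ∪ P₃.support

/-- The whole graph `G` is a prism. -/
def IsPrismGraph {V : Type u} (G : SimpleGraph V) : Prop :=
  ∃ (a₁ a₂ a₃ b₁ b₂ b₃ : V) (P₁ : IPath G a₁ b₁) (P₂ : IPath G a₂ b₂) (P₃ : IPath G a₃ b₃),
    PrismWitness G a₁ a₂ a₃ b₁ b₂ b₃ P₁ P₂ P₃ ∧
    ∀ u : V, u ∈ P₁.support ∪ P₂.support ∪ P₃.support

/-- The whole graph `G` is (the graph of) an even wheel. -/
def IsEvenWheelGraph {V : Type u} (G : SimpleGraph V) : Prop :=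
  ∃ (n : ℕ) (f : cycleGraph n ↪g G) (v : V),
    WheelWitness G n f v ∧ Even ((NbrsIn G (Set.range f) v).ncard) ∧
    ∀ u : V, u ∈ insert v (Set.range f)

/-- The graph `G△^{z₁}_{z₂}`: delete `z₁` and `z₂` and add a new vertex (represented by
`none`) whose neighborhood is exactly `N_G(z₁) ∩ N_G(z₂)`. -/
def triMinor {V : Type u} (G : SimpleGraph V) (z₁ z₂ : V) :
    SimpleGraph (Option {v : V // v ≠ z₁ ∧ v ≠ z₂}) where
  Adj x y :=
    match x, y with
    | some a, some b => G.Adj a b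
    | some a, none => G.Adj z₁ a ∧ G.Adj z₂ a
    | none, some b => G.Adj z₁ b ∧ G.Adj z₂ b
    | none, none => False
  symm := by
    constructor
    rintro (_ | a) (_ | b) h
    · exact h
    · exact h
    · exact h
    · exact G.adj_symm h
  loopless := by
    constructor
    rintro (_ | a) h
    · exact h
    · exact G.irrefl h

/-- `v` is a `d`-substantial vertex of `G`: there is a hole `C` of `G ∖ {v}` in which `v`
has at least `d + 1` neighbors and such that `C ∖ N_C(v)` is disconnected. -/
def Substantial {V : Type u} (G : SimpleGraph V) (d : ℕ) (v : V) : Prop :=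
  ∃ (n : ℕ) (f : cycleGraph n ↪g G), 4 ≤ n ∧ v ∉ Set.range f ∧
    d + 1 ≤ (NbrsIn G (Set.range f) v).ncard ∧
    ¬ (G.induce (Set.range f \ G.neighborSet v)).Connected

/-- A `w`-kaleidoscope `(a, x, y, 𝒲)` in `G`: `x–a–y` is an induced path, `𝒲` is a family of
`w` pairwise internally disjoint induced paths from `x` to `y` avoiding `a`, and `a` is
anticomplete to the interior of every path of the family. -/
structure Kaleidoscope {V : Type u} (G : SimpleGraph V) (w : ℕ) where
  a : V
  x : V
  y : V
  hxy : x ≠ y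
  hnadj : ¬ G.Adj x y
  hax : G.Adj a x
  hay : G.Adj a y
  W : Fin w → IPath G x y
  notA : ∀ i, a ∉ (W i).support
  intDisj : ∀ i j, i ≠ j → Disjoint (W i).interior (W j).interior
  aAnti : ∀ i, ∀ u ∈ (W i).interior, ¬ G.Adj a u

/-- Restriction of a kaleidoscope to the subfamily of paths indexed by an injection `g`. -/
def Kaleidoscope.restrict {V : Type u} {G : SimpleGraph V} {k w : ℕ}
    (K : Kaleidoscope G k) (g : Fin w → Fin k) (hg : Function.Injective g) :
    Kaleidoscope G w where
  a := K.a
  x := K.x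
  y := K.y
  hxy := K.hxy
  hnadj := K.hnadj
  hax := K.hax
  hay := K.hay
  W := fun i => K.W (g i)
  notA := fun i => K.notA (g i)
  intDisj := fun i j hij => K.intDisj (g i) (g j) (fun e => hij (hg e))
  aAnti := fun i => K.aAnti (g i)

/-- The set `Z` is `d`-mirrored by the kaleidoscope `K = (a, x, y, 𝒲)`: `Z` avoids `a` and
all paths of `𝒲`; `a` has at most one neighbor in `Z`; and every `z ∈ Z` is anticomplete to
`N_W[x] ∪ N_W[y]` and has at least `d` neighbors in `W`, for every `W ∈ 𝒲`. -/
def Mirrored {V : Type u} (G : SimpleGraph V) {w : ℕ} (K : Kaleidoscope G w) (d : ℕ)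
    (Z : Set V) : Prop :=
  K.a ∉ Z ∧
  (∀ i, ∀ z ∈ Z, z ∉ (K.W i).support) ∧
  (Z ∩ G.neighborSet K.a).ncard ≤ 1 ∧
  ∀ z ∈ Z, ∀ i,
    (∀ u ∈ insert K.x (NbrsIn G (K.W i).support K.x) ∪
        insert K.y (NbrsIn G (K.W i).support K.y), ¬ G.Adj z u) ∧
    d ≤ (NbrsIn G (K.W i).support z).ncard
/-- An `(s, l)`-palanquin `(a, S, ℒ)` in `G`: `S` is a stable set of `s` neighbors of `a`,
and `ℒ` is a family of `l` pairwise disjoint induced paths, all avoiding `S ∪ {a}`, such that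
`a` is anticomplete to every path of `ℒ` and every vertex of `S` has a neighbor in every
path of `ℒ`. -/
structure Palanquin {V : Type u} (G : SimpleGraph V) (s l : ℕ) where
  a : V
  S : Set V
  L : Fin l → IndPath G
  sub : S ⊆ G.neighborSet a
  stable : ∀ u ∈ S, ∀ w ∈ S, ¬ G.Adj u w
  card : S.ncard = s
  disj : ∀ i j, i ≠ j → Disjoint (L i).support (L j).support
  avoid : ∀ i, Disjoint (L i).support (insert a S)
  anti : ∀ i, ∀ u ∈ (L i).support, ¬ G.Adj a u
  nbr : ∀ x ∈ S, ∀ i, ∃ u ∈ (L i).support, G.Adj x u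

/-- The ordering condition of an alignment: for `i < j`, all neighbors of `π i` on the path
appear strictly before all neighbors of `π j`, positions being counted from the first vertex
of `P` if `rev = false`, and from the last vertex if `rev = true`. -/
def AlignOrder {V : Type u} (G : SimpleGraph V) {s : ℕ} (P : IndPath G)
    (π : Fin s → V) (rev : Bool) : Prop :=
  ∀ i j : Fin s, i < j → ∀ ii jj : Fin P.n,
    G.Adj (π i) (P.f ii) → G.Adj (π j) (P.f jj) →
    (if rev then (jj : ℕ) < (ii : ℕ) else (ii : ℕ) < (jj : ℕ))

/-- `(S, P, x, π)` is an `s`-alignment in `G`: `S` is a stable set of size `s` enumerated by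
the bijection `π`, the induced path `P` avoids `S`, has `x` as an end, every vertex of `S`
has a neighbor in `P`, and traversing `P` starting at `x`, for `i < j` all neighbors of
`π i` appear strictly before all neighbors of `π j`. -/
def IsAlignment {V : Type u} (G : SimpleGraph V) (s : ℕ) (S : Set V) (P : IndPath G)
    (x : V) (π : Fin s → V) : Prop :=
  (∀ u ∈ S, ∀ w ∈ S, ¬ G.Adj u w) ∧ S.ncard = s ∧
  Function.Injective π ∧ Set.range π = S ∧
  Disjoint S P.support ∧
  (∀ u ∈ S, ∃ w ∈ P.support, G.Adj u w) ∧
  ((x = P.first ∧ AlignOrder G P π false) ∨ (x = P.last ∧ AlignOrder G P π true))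

/-- `N` is a `k`-tree: either a complete graph on `k` vertices, or a graph on `h > k`
vertices admitting a bijection onto `{0, …, h-1}` such that every vertex among the first
`h - k` has its set of forward neighbors a clique of exactly `k` vertices. -/
def IsKTree {α : Type u} [Fintype α] (k : ℕ) (N : SimpleGraph α) : Prop :=
  (Fintype.card α = k ∧ N = ⊤) ∨
  (k < Fintype.card α ∧ ∃ e : α ≃ Fin (Fintype.card α),
    ∀ w : α, (e w : ℕ) < Fintype.card α - k →
      N.IsClique {u | N.Adj w u ∧ e w < e u} ∧ {u | N.Adj w u ∧ e w < e u}.ncard = k)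

/-- `N`, a graph on `Fin m`, is a `k`-tree whose defining ordering is the natural order of
`Fin m`. -/
def IsOrderedKTree (k m : ℕ) (N : SimpleGraph (Fin m)) : Prop :=
  (m = k ∧ N = ⊤) ∨
  (k < m ∧ ∀ i : Fin m, (i : ℕ) < m - k →
    N.IsClique {j | N.Adj i j ∧ i < j} ∧ {j | N.Adj i j ∧ i < j}.ncard = k)

/-- The set `S` is (the vertex set of) a blurry copy of the ordered `2`-tree `N` in `G`:
there is an enumeration `e` of `S` such that the copy `Y` of `N` transported along `e` is a
spanning subgraph of `G[S]`, and whenever `i < j` and `e i, e j` are adjacent in `G` but not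
in `Y`, the vertex `e j` is adjacent in `G` to both forward neighbors of `e i` in `Y`. -/
def BlurryCopy {V : Type u} {m : ℕ} (G : SimpleGraph V) (N : SimpleGraph (Fin m))
    (S : Set V) : Prop :=
  ∃ e : Fin m → V, Function.Injective e ∧ Set.range e = S ∧
    (∀ i j : Fin m, N.Adj i j → G.Adj (e i) (e j)) ∧
    (∀ i j : Fin m, i < j → G.Adj (e i) (e j) → ¬ N.Adj i j →
      ∀ k : Fin m, N.Adj i k → i < k → G.Adj (e j) (e k))

section Helpers

open Classical

variable {V : Type} {G : SimpleGraph V}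

/-- Build a path-graph embedding from pointwise data. -/
def embedOfFn (G : SimpleGraph V) {n : ℕ} (f : Fin n → V)
    (hinj : Function.Injective f)
    (hadj : ∀ i j : Fin n, G.Adj (f i) (f j) ↔ ((i : ℕ) + 1 = j ∨ (j : ℕ) + 1 = i)) :
    pathGraph n ↪g G where
  toFun := f
  inj' := hinj
  map_rel_iff' := fun {i j} => (hadj i j).trans pathGraph_adj.symm

/-- A three-vertex induced path as an `IPath`. -/
def iPath3 {v0 v1 v2 : V} (h01 : G.Adj v0 v1) (h12 : G.Adj v1 v2)
    (h02 : ¬ G.Adj v0 v2) (hne : v0 ≠ v2) : IPath G v0 v2 where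
  n := 3
  pos := by norm_num
  f := embedOfFn G ![v0, v1, v2]
    (by
      have d01 : v0 ≠ v1 := h01.ne
      have d12 : v1 ≠ v2 := h12.ne
      intro i j hij
      fin_cases i <;> fin_cases j <;> first | rfl | (exfalso; simp_all))
    (by
      have h20 : ¬ G.Adj v2 v0 := fun h => h02 h.symm
      intro i j
      fin_cases i <;> fin_cases j <;>
        simp [h01, h12, h02, h20, h01.symm, h12.symm, G.irrefl])
  hx := by rfl
  hy := by rfl

lemma iPath3_interior {v0 v1 v2 : V} (h01 : G.Adj v0 v1) (h12 : G.Adj v1 v2)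
    (h02 : ¬ G.Adj v0 v2) (hne : v0 ≠ v2) :
    (iPath3 h01 h12 h02 hne).interior ⊆ {v1} := by
  rintro v ⟨i, hi0, hi1, hfi⟩
  have hi1' : (i : ℕ) < 2 := hi1
  have h1 : i = ⟨1, (by norm_num : (1:ℕ) < 3)⟩ := Fin.ext (show (i:ℕ) = 1 by omega)
  subst h1
  exact Set.mem_singleton_iff.mpr (by rw [← hfi]; rfl)

lemma iPath3_length {v0 v1 v2 : V} (h01 : G.Adj v0 v1) (h12 : G.Adj v1 v2)
    (h02 : ¬ G.Adj v0 v2) (hne : v0 ≠ v2) :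
    (iPath3 h01 h12 h02 hne).length = 2 := rfl

end Helpers
section Helpers2

variable {V : Type} {G : SimpleGraph V}

/-- Two non-adjacent common neighbours of a non-adjacent pair `x, y` that also has the common
neighbour `a` yield a theta. -/
lemma theta_of_common {a x y u w : V} (hxy : x ≠ y) (hnxy : ¬ G.Adj x y)
    (hax : G.Adj a x) (hay : G.Adj a y) (hxu : G.Adj x u) (hyu : G.Adj y u)
    (hxw : G.Adj x w) (hyw : G.Adj y w) (hau : ¬ G.Adj a u) (haw : ¬ G.Adj a w)
    (huw : ¬ G.Adj u w) (hau' : a ≠ u) (haw' : a ≠ w) (huw' : u ≠ w) : HasTheta G := by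
  refine ⟨x, y, iPath3 hax.symm hay hnxy hxy, iPath3 hxu hyu.symm hnxy hxy,
    iPath3 hxw hyw.symm hnxy hxy, hxy, hnxy, ?_, ?_, ?_, ?_, ?_, ?_, ?_, ?_, ?_⟩
  · rw [iPath3_length]
  · rw [iPath3_length]
  · rw [iPath3_length]
  · exact Set.disjoint_of_subset (iPath3_interior _ _ _ _) (iPath3_interior _ _ _ _)
      (by simpa using hau')
  · exact Set.disjoint_of_subset (iPath3_interior _ _ _ _) (iPath3_interior _ _ _ _)
      (by simpa using haw')
  · exact Set.disjoint_of_subset (iPath3_interior _ _ _ _) (iPath3_interior _ _ _ _)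
      (by simpa using huw')
  · intro v hv v' hv'
    have := iPath3_interior _ _ _ _ hv
    have := iPath3_interior _ _ _ _ hv'
    simp_all
  · intro v hv v' hv'
    have := iPath3_interior _ _ _ _ hv
    have := iPath3_interior _ _ _ _ hv'
    simp_all
  · intro v hv v' hv'
    have := iPath3_interior _ _ _ _ hv
    have := iPath3_interior _ _ _ _ hv'
    simp_all

end Helpers2
section Helpers3

variable {V : Type} {G : SimpleGraph V}

/-- Reversal automorphism of the path graph. -/
def pathGraphRev (n : ℕ) : pathGraph n ↪g pathGraph n where
  toFun := Fin.rev
  inj' := Fin.rev_injective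
  map_rel_iff' := by
    intro i j
    show (pathGraph n).Adj i.rev j.rev ↔ (pathGraph n).Adj i j
    have hi := i.isLt
    have hj := j.isLt
    simp only [pathGraph_adj, Fin.val_rev]
    omega

/-- The reverse of an induced path. -/
def IndPath.rev (P : IndPath G) : IndPath G := ⟨P.n, P.pos, P.f.comp (pathGraphRev P.n)⟩

lemma IndPath.rev_n (P : IndPath G) : P.rev.n = P.n := rfl

lemma IndPath.rev_f (P : IndPath G) (j : Fin P.n) : P.rev.f j = P.f j.rev := rfl

lemma IndPath.rev_support (P : IndPath G) : P.rev.support = P.support := by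
  ext v
  constructor
  · rintro ⟨j, rfl⟩; exact ⟨j.rev, rfl⟩
  · rintro ⟨j, rfl⟩; exact ⟨j.rev, by simp [IndPath.rev_f]⟩

/-- The vertex function of the path `a – x – P.f s – P.f (s+1) – ⋯ – P.f e`. -/
def segFun (P : IndPath G) (a x : V) (s e : Fin P.n) (hse : (s : ℕ) ≤ (e : ℕ)) :
    Fin ((e : ℕ) - (s : ℕ) + 3) → V := fun i =>
  if (i : ℕ) = 0 then a
  else if (i : ℕ) = 1 then x
  else P.f ⟨(s : ℕ) + ((i : ℕ) - 2), by have h1 := i.isLt; have h2 := e.isLt; omega⟩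

lemma segFun_zero {P : IndPath G} {a x : V} {s e : Fin P.n} (hse : (s : ℕ) ≤ (e : ℕ))
    (i : Fin ((e : ℕ) - (s : ℕ) + 3)) (h : (i : ℕ) = 0) :
    segFun P a x s e hse i = a := by
  simp [segFun, h]

lemma segFun_one {P : IndPath G} {a x : V} {s e : Fin P.n} (hse : (s : ℕ) ≤ (e : ℕ))
    (i : Fin ((e : ℕ) - (s : ℕ) + 3)) (h : (i : ℕ) = 1) :
    segFun P a x s e hse i = x := by
  simp [segFun, h]

lemma segFun_ge {P : IndPath G} {a x : V} {s e : Fin P.n} (hse : (s : ℕ) ≤ (e : ℕ))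
    (i : Fin ((e : ℕ) - (s : ℕ) + 3)) (h2 : 2 ≤ (i : ℕ)) :
    segFun P a x s e hse i =
      P.f ⟨(s : ℕ) + ((i : ℕ) - 2), by have h1 := i.isLt; have h3 := e.isLt; omega⟩ := by
  simp only [segFun]
  rw [if_neg (by omega), if_neg (by omega)]

/-- The induced path `a – x – P.f s – ⋯ – P.f e`, where `x`'s unique neighbour on `P`
is `P.f s` and `a` is anticomplete to `P`. -/
def extendSeg (P : IndPath G) (a x b : V) (s e : Fin P.n) (hse : (s : ℕ) ≤ (e : ℕ))
    (hax : G.Adj a x)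
    (haL : ∀ j : Fin P.n, ¬ G.Adj a (P.f j))
    (haP : ∀ j : Fin P.n, a ≠ P.f j) (hxP : ∀ j : Fin P.n, x ≠ P.f j)
    (hxadj : ∀ j : Fin P.n, G.Adj x (P.f j) ↔ j = s)
    (hb : P.f e = b) : IPath G a b where
  n := (e : ℕ) - (s : ℕ) + 3
  pos := by omega
  f := embedOfFn G (segFun P a x s e hse)
    (by
      intro i j hij
      have hi := i.isLt
      have hj := j.isLt
      rcases Nat.lt_or_ge (i : ℕ) 2 with hi2 | hi2 <;>
        rcases Nat.lt_or_ge (j : ℕ) 2 with hj2 | hj2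
      · have hii : (i : ℕ) = 0 ∨ (i : ℕ) = 1 := by omega
        have hjj : (j : ℕ) = 0 ∨ (j : ℕ) = 1 := by omega
        rcases hii with hii | hii <;> rcases hjj with hjj | hjj
        · exact Fin.ext (by omega)
        · rw [segFun_zero hse i hii, segFun_one hse j hjj] at hij
          exact absurd hij hax.ne
        · rw [segFun_one hse i hii, segFun_zero hse j hjj] at hij
          exact absurd hij.symm hax.ne
        · exact Fin.ext (by omega)
      · rw [segFun_ge hse j hj2] at hij
        have hii : (i : ℕ) = 0 ∨ (i : ℕ) = 1 := by omega
        rcases hii with hii | hii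
        · rw [segFun_zero hse i hii] at hij
          exact absurd hij (haP _)
        · rw [segFun_one hse i hii] at hij
          exact absurd hij (hxP _)
      · rw [segFun_ge hse i hi2] at hij
        have hjj : (j : ℕ) = 0 ∨ (j : ℕ) = 1 := by omega
        rcases hjj with hjj | hjj
        · rw [segFun_zero hse j hjj] at hij
          exact absurd hij.symm (haP _)
        · rw [segFun_one hse j hjj] at hij
          exact absurd hij.symm (hxP _)
      · rw [segFun_ge hse i hi2, segFun_ge hse j hj2] at hij
        have h3 : (s : ℕ) + ((i : ℕ) - 2) = (s : ℕ) + ((j : ℕ) - 2) := by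
          simpa using congrArg Fin.val (P.f.injective hij)
        exact Fin.ext (by omega))
    (by
      intro i j
      have hi := i.isLt
      have hj := j.isLt
      rcases Nat.lt_or_ge (i : ℕ) 2 with hi2 | hi2 <;>
        rcases Nat.lt_or_ge (j : ℕ) 2 with hj2 | hj2
      · have hii : (i : ℕ) = 0 ∨ (i : ℕ) = 1 := by omega
        have hjj : (j : ℕ) = 0 ∨ (j : ℕ) = 1 := by omega
        rcases hii with hii | hii <;> rcases hjj with hjj | hjj
        · rw [segFun_zero hse i hii, segFun_zero hse j hjj]
          exact iff_of_false G.irrefl (by omega)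
        · rw [segFun_zero hse i hii, segFun_one hse j hjj]
          exact iff_of_true hax (by omega)
        · rw [segFun_one hse i hii, segFun_zero hse j hjj]
          exact iff_of_true hax.symm (by omega)
        · rw [segFun_one hse i hii, segFun_one hse j hjj]
          exact iff_of_false G.irrefl (by omega)
      · rw [segFun_ge hse j hj2]
        have hii : (i : ℕ) = 0 ∨ (i : ℕ) = 1 := by omega
        rcases hii with hii | hii
        · rw [segFun_zero hse i hii]
          exact iff_of_false (haL _) (by omega)
        · rw [segFun_one hse i hii]
          constructor
          · intro h
            have h2' := (hxadj _).mp h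
            have : (s : ℕ) + ((j : ℕ) - 2) = (s : ℕ) := by
              simpa using congrArg Fin.val h2'
            omega
          · intro h
            rw [hxadj]
            exact Fin.ext (by show (s : ℕ) + ((j : ℕ) - 2) = (s : ℕ); omega)
      · rw [segFun_ge hse i hi2]
        have hjj : (j : ℕ) = 0 ∨ (j : ℕ) = 1 := by omega
        rcases hjj with hjj | hjj
        · rw [segFun_zero hse j hjj]
          constructor
          · intro h; exact absurd h.symm (haL _)
          · intro h; omega
        · rw [segFun_one hse j hjj]
          constructor
          · intro h
            have h2' := (hxadj _).mp h.symm
            have : (s : ℕ) + ((i : ℕ) - 2) = (s : ℕ) := by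
              simpa using congrArg Fin.val h2'
            omega
          · intro h
            have : G.Adj x (P.f ⟨(s : ℕ) + ((i : ℕ) - 2), by have := e.isLt; omega⟩) := by
              rw [hxadj]
              exact Fin.ext (by show (s : ℕ) + ((i : ℕ) - 2) = (s : ℕ); omega)
            exact this.symm
      · rw [segFun_ge hse i hi2, segFun_ge hse j hj2]
        rw [P.f.map_rel_iff, pathGraph_adj]
        show (s : ℕ) + ((i : ℕ) - 2) + 1 = (s : ℕ) + ((j : ℕ) - 2) ∨
          (s : ℕ) + ((j : ℕ) - 2) + 1 = (s : ℕ) + ((i : ℕ) - 2) ↔ _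
        omega)
  hx := by
    show segFun P a x s e hse ⟨0, by omega⟩ = a
    exact segFun_zero hse _ rfl
  hy := by
    show segFun P a x s e hse ⟨(e : ℕ) - (s : ℕ) + 3 - 1, by omega⟩ = b
    rw [segFun_ge hse _ (show 2 ≤ (e : ℕ) - (s : ℕ) + 3 - 1 by omega)]
    have he : (⟨(s : ℕ) + ((e : ℕ) - (s : ℕ) + 3 - 1 - 2), by have := e.isLt; omega⟩ :
        Fin P.n) = e := Fin.ext (by show (s : ℕ) + ((e : ℕ) - (s : ℕ) + 3 - 1 - 2) = e; omega)
    rw [he, hb]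

lemma extendSeg_n (P : IndPath G) (a x b : V) (s e : Fin P.n) (hse : (s : ℕ) ≤ (e : ℕ))
    (hax : G.Adj a x) (haL : ∀ j : Fin P.n, ¬ G.Adj a (P.f j))
    (haP : ∀ j : Fin P.n, a ≠ P.f j) (hxP : ∀ j : Fin P.n, x ≠ P.f j)
    (hxadj : ∀ j : Fin P.n, G.Adj x (P.f j) ↔ j = s) (hb : P.f e = b) :
    (extendSeg P a x b s e hse hax haL haP hxP hxadj hb).n = (e : ℕ) - (s : ℕ) + 3 := rfl

lemma extendSeg_length (P : IndPath G) (a x b : V) (s e : Fin P.n) (hse : (s : ℕ) ≤ (e : ℕ))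
    (hax : G.Adj a x) (haL : ∀ j : Fin P.n, ¬ G.Adj a (P.f j))
    (haP : ∀ j : Fin P.n, a ≠ P.f j) (hxP : ∀ j : Fin P.n, x ≠ P.f j)
    (hxadj : ∀ j : Fin P.n, G.Adj x (P.f j) ↔ j = s) (hb : P.f e = b) :
    2 ≤ (extendSeg P a x b s e hse hax haL haP hxP hxadj hb).length := by
  unfold IPath.length
  rw [extendSeg_n]
  omega

lemma extendSeg_interior (P : IndPath G) (a x b : V) (s e : Fin P.n) (hse : (s : ℕ) ≤ (e : ℕ))
    (hax : G.Adj a x) (haL : ∀ j : Fin P.n, ¬ G.Adj a (P.f j))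
    (haP : ∀ j : Fin P.n, a ≠ P.f j) (hxP : ∀ j : Fin P.n, x ≠ P.f j)
    (hxadj : ∀ j : Fin P.n, G.Adj x (P.f j) ↔ j = s) (hb : P.f e = b) :
    ∀ v ∈ (extendSeg P a x b s e hse hax haL haP hxP hxadj hb).interior,
      v = x ∨ ∃ j : Fin P.n, (s : ℕ) ≤ (j : ℕ) ∧ (j : ℕ) < (e : ℕ) ∧ v = P.f j := by
  rintro v ⟨i, hi0, hi1, hfi⟩
  have hi0' : 0 < (i : ℕ) := hi0
  have hi1' : (i : ℕ) < (e : ℕ) - (s : ℕ) + 3 - 1 := hi1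
  have hfi' : segFun P a x s e hse ⟨(i : ℕ), by omega⟩ = v := hfi
  rcases Nat.lt_or_ge (i : ℕ) 2 with hi2 | hi2
  · left
    rw [← hfi']
    exact segFun_one hse _ (by show (i : ℕ) = 1; omega)
  · right
    refine ⟨⟨(s : ℕ) + ((i : ℕ) - 2), by have := e.isLt; omega⟩,
      by show (s : ℕ) ≤ (s : ℕ) + ((i : ℕ) - 2); omega,
      by show (s : ℕ) + ((i : ℕ) - 2) < (e : ℕ); omega, ?_⟩
    rw [← hfi']
    exact segFun_ge hse _ (by show 2 ≤ (i : ℕ); omega)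

end Helpers3
section Helpers4

variable {V : Type} {G : SimpleGraph V}

lemma theta_of_three_goods {a x y z : V} (P : IndPath G)
    (hax : G.Adj a x) (hay : G.Adj a y) (haz : G.Adj a z)
    (hxy : ¬ G.Adj x y) (hxz : ¬ G.Adj x z) (hyz : ¬ G.Adj y z)
    (hxyne : x ≠ y) (hxzne : x ≠ z) (hyzne : y ≠ z)
    (haL : ∀ j : Fin P.n, ¬ G.Adj a (P.f j))
    (haP : ∀ j : Fin P.n, a ≠ P.f j)
    (hxP : ∀ j : Fin P.n, x ≠ P.f j) (hyP : ∀ j : Fin P.n, y ≠ P.f j)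
    (hzP : ∀ j : Fin P.n, z ≠ P.f j)
    (px py pz : Fin P.n) (hpxy : (px : ℕ) < (py : ℕ)) (hpyz : (py : ℕ) < (pz : ℕ))
    (hxu : ∀ j, G.Adj x (P.f j) ↔ j = px)
    (hyu : ∀ j, G.Adj y (P.f j) ↔ j = py)
    (hzu : ∀ j, G.Adj z (P.f j) ↔ j = pz) : HasTheta G := by
  classical
  have hypy : G.Adj y (P.f py) := (hyu py).mpr rfl
  -- path 1 : a – y – P.f py
  let Q1 : IPath G a (P.f py) := iPath3 hay hypy (haL py) (haP py)
  -- path 2 : a – x – P.f px – ⋯ – P.f py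
  let Q2 : IPath G a (P.f py) :=
    extendSeg P a x (P.f py) px py (le_of_lt hpxy) hax haL haP hxP hxu rfl
  -- path 3 : a – z – P.f pz – ⋯ – P.f py (through the reversed path)
  have hrevL : ∀ j : Fin P.rev.n, ¬ G.Adj a (P.rev.f j) := fun j => haL j.rev
  have hrevP : ∀ j : Fin P.rev.n, a ≠ P.rev.f j := fun j => haP j.rev
  have hrevz : ∀ j : Fin P.rev.n, z ≠ P.rev.f j := fun j => hzP j.rev
  have hse' : ((pz.rev : Fin P.rev.n) : ℕ) ≤ ((py.rev : Fin P.rev.n) : ℕ) := by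
    have h1 := py.isLt
    have h2 := pz.isLt
    simp only [Fin.val_rev]
    omega
  have hzu' : ∀ j : Fin P.rev.n, G.Adj z (P.rev.f j) ↔ j = pz.rev := by
    intro j
    have hn : P.rev.n = P.n := rfl
    have hj := j.isLt
    have h1 := pz.isLt
    refine (hzu j.rev).trans ⟨fun h => Fin.ext ?_, fun h => Fin.ext ?_⟩
    · have := congrArg Fin.val h; simp only [Fin.val_rev] at this ⊢; omega
    · have := congrArg Fin.val h; simp only [Fin.val_rev] at this ⊢; omega
  have hb' : P.rev.f py.rev = P.f py := by rw [P.rev_f, Fin.rev_rev]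
  let Q3 : IPath G a (P.f py) :=
    extendSeg P.rev a z (P.f py) pz.rev py.rev hse' haz hrevL hrevP hrevz hzu' hb'
  have hI1 : Q1.interior ⊆ {y} := iPath3_interior _ _ _ _
  have hI2 : ∀ v ∈ Q2.interior,
      v = x ∨ ∃ j : Fin P.n, (px : ℕ) ≤ (j : ℕ) ∧ (j : ℕ) < (py : ℕ) ∧ v = P.f j :=
    extendSeg_interior _ _ _ _ _ _ _ _ _ _ _ _ _
  have hI3 : ∀ v ∈ Q3.interior,
      v = z ∨ ∃ k : Fin P.n, (py : ℕ) < (k : ℕ) ∧ (k : ℕ) ≤ (pz : ℕ) ∧ v = P.f k := by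
    intro v hv
    rcases extendSeg_interior _ _ _ _ _ _ _ _ _ _ _ _ _ v hv with h | ⟨j, hj1, hj2, hj3⟩
    · exact Or.inl h
    · right
      have h1 := py.isLt
      have h2 := pz.isLt
      have h3 : (j : ℕ) < P.n := j.isLt
      have hj1' : (P.n : ℕ) - ((pz : ℕ) + 1) ≤ (j : ℕ) := hj1
      have hj2' : (j : ℕ) < (P.n : ℕ) - ((py : ℕ) + 1) := hj2
      have hn : P.rev.n = P.n := rfl
      refine ⟨j.rev, ?_, ?_, by rw [hj3]; rfl⟩
      · rw [Fin.val_rev]; omega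
      · rw [Fin.val_rev]; omega
  -- adjacency facts
  have hadjP : ∀ (j k : Fin P.n), (j : ℕ) + 1 < (k : ℕ) → ¬ G.Adj (P.f j) (P.f k) := by
    intro j k hjk hadj
    rw [P.f.map_rel_iff, pathGraph_adj] at hadj
    omega
  refine ⟨a, P.f py, Q1, Q2, Q3, haP py, haL py, le_rfl,
    extendSeg_length _ _ _ _ _ _ _ _ _ _ _ _ _,
    extendSeg_length _ _ _ _ _ _ _ _ _ _ _ _ _, ?_, ?_, ?_, ?_, ?_, ?_⟩
  · refine Set.disjoint_left.mpr fun v hv1 hv2 => ?_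
    have h1 : v = y := hI1 hv1
    rcases hI2 v hv2 with h2 | ⟨j, _, _, h2⟩
    · exact hxyne (h2.symm.trans h1)
    · exact hyP j (h1.symm.trans h2)
  · refine Set.disjoint_left.mpr fun v hv1 hv2 => ?_
    have h1 : v = y := hI1 hv1
    rcases hI3 v hv2 with h2 | ⟨k, _, _, h2⟩
    · exact hyzne (h1.symm.trans h2)
    · exact hyP k (h1.symm.trans h2)
  · refine Set.disjoint_left.mpr fun v hv1 hv2 => ?_
    rcases hI2 v hv1 with h1 | ⟨j, hj1, hj2, h1⟩ <;>
      rcases hI3 v hv2 with h2 | ⟨k, hk1, hk2, h2⟩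
    · exact hxzne (h1.symm.trans h2)
    · exact hxP k (h1.symm.trans h2)
    · exact hzP j (h2.symm.trans h1)
    · have : j = k := P.f.injective (h1.symm.trans h2)
      have : (j : ℕ) = (k : ℕ) := congrArg Fin.val this
      omega
  · intro u hu v hv
    have h1 : u = y := hI1 hu
    subst h1
    rcases hI2 v hv with h2 | ⟨j, hj1, hj2, h2⟩
    · subst h2; exact fun h => hxy h.symm
    · subst h2
      intro h
      have := congrArg Fin.val ((hyu j).mp h)
      omega
  · intro u hu v hv
    have h1 : u = y := hI1 hu
    subst h1
    rcases hI3 v hv with h2 | ⟨k, hk1, hk2, h2⟩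
    · subst h2; exact hyz
    · subst h2
      intro h
      have := congrArg Fin.val ((hyu k).mp h)
      omega
  · intro u hu v hv
    rcases hI2 u hu with h1 | ⟨j, hj1, hj2, h1⟩ <;>
      rcases hI3 v hv with h2 | ⟨k, hk1, hk2, h2⟩
    · subst h1; subst h2; exact hxz
    · subst h1; subst h2
      intro h
      have := congrArg Fin.val ((hxu k).mp h)
      omega
    · subst h1; subst h2
      intro h
      have := congrArg Fin.val ((hzu j).mp h.symm)
      omega
    · subst h1; subst h2
      exact hadjP j k (by omega)

end Helpers4
section Helpers5

variable {V : Type} {G : SimpleGraph V}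

lemma good_unique {x : V} (P : IndPath G) (hgood : GoodFor G P.support x) :
    ∃ px : Fin P.n, ∀ j, G.Adj x (P.f j) ↔ j = px := by
  obtain ⟨u, hu⟩ := Set.ncard_eq_one.mp hgood
  have humem : u ∈ NbrsIn G P.support x := hu ▸ rfl
  obtain ⟨px, hpx⟩ : u ∈ P.support := humem.1
  refine ⟨px, fun j => ⟨fun h => ?_, fun h => ?_⟩⟩
  · have : P.f j ∈ NbrsIn G P.support x := ⟨⟨j, rfl⟩, h⟩
    rw [hu] at this
    exact P.f.injective (this.trans hpx.symm)
  · subst h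
    rw [hpx]
    exact humem.2

lemma goods_le_two [Fintype V] (hTheta : ¬ HasTheta G) {a : V} {S : Set V}
    (hSnbr : S ⊆ G.neighborSet a) (hstable : ∀ u ∈ S, ∀ w ∈ S, ¬ G.Adj u w)
    (P : IndPath G) (hdisj : Disjoint P.support (insert a S))
    (hanti : ∀ u ∈ P.support, ¬ G.Adj a u)
    (hclean : ∀ x ∈ S, ∀ y ∈ S, x ≠ y → ¬ ∃ u ∈ P.support, G.Adj x u ∧ G.Adj y u) :
    {x ∈ S | GoodFor G P.support x}.ncard ≤ 2 := by
  classical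
  by_contra hcon
  push_neg at hcon
  obtain ⟨x, hx, y, hy, z, hz, hxyne, hxzne, hyzne⟩ :=
    (Set.two_lt_ncard (Set.toFinite _)).mp hcon
  obtain ⟨hxS, hxg⟩ := hx
  obtain ⟨hyS, hyg⟩ := hy
  obtain ⟨hzS, hzg⟩ := hz
  obtain ⟨px, hpx⟩ := good_unique P hxg
  obtain ⟨py, hpy⟩ := good_unique P hyg
  obtain ⟨pz, hpz⟩ := good_unique P hzg
  -- basic facts
  have hax : G.Adj a x := hSnbr hxS
  have hay : G.Adj a y := hSnbr hyS
  have haz : G.Adj a z := hSnbr hzS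
  have haL : ∀ j : Fin P.n, ¬ G.Adj a (P.f j) := fun j => hanti _ ⟨j, rfl⟩
  have hnotin : ∀ v ∈ insert a S, ∀ j : Fin P.n, v ≠ P.f j := by
    intro v hv j hvj
    exact (Set.disjoint_right.mp hdisj hv) ⟨j, hvj.symm⟩
  have haP := hnotin a (Set.mem_insert _ _)
  have hxP := hnotin x (Set.mem_insert_of_mem _ hxS)
  have hyP := hnotin y (Set.mem_insert_of_mem _ hyS)
  have hzP := hnotin z (Set.mem_insert_of_mem _ hzS)
  -- the three positions are pairwise distinct
  have hdist : ∀ {u w : V} {pu pw : Fin P.n}, u ∈ S → w ∈ S → u ≠ w →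
      (∀ j, G.Adj u (P.f j) ↔ j = pu) → (∀ j, G.Adj w (P.f j) ↔ j = pw) → pu ≠ pw := by
    intro u w pu pw huS hwS huw hu hw he
    exact hclean u huS w hwS huw ⟨P.f pu, ⟨pu, rfl⟩, (hu pu).mpr rfl, (hw pu).mpr he⟩
  have d1 : px ≠ py := hdist hxS hyS hxyne hpx hpy
  have d2 : px ≠ pz := hdist hxS hzS hxzne hpx hpz
  have d3 : py ≠ pz := hdist hyS hzS hyzne hpy hpz
  have d1' : (px : ℕ) ≠ (py : ℕ) := fun h => d1 (Fin.ext h)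
  have d2' : (px : ℕ) ≠ (pz : ℕ) := fun h => d2 (Fin.ext h)
  have d3' : (py : ℕ) ≠ (pz : ℕ) := fun h => d3 (Fin.ext h)
  have hst : ∀ {u w : V}, u ∈ S → w ∈ S → ¬ G.Adj u w := fun hu hw => hstable _ hu _ hw
  -- six orderings
  rcases Nat.lt_or_ge (px : ℕ) (py : ℕ) with h1 | h1 <;>
    rcases Nat.lt_or_ge (py : ℕ) (pz : ℕ) with h2 | h2 <;>
    rcases Nat.lt_or_ge (px : ℕ) (pz : ℕ) with h3 | h3
  · exact hTheta (theta_of_three_goods P hax hay haz (hst hxS hyS) (hst hxS hzS)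
      (hst hyS hzS) hxyne hxzne hyzne haL haP hxP hyP hzP px py pz h1 h2 hpx hpy hpz)
  · omega
  · exact hTheta (theta_of_three_goods P hax haz hay (hst hxS hzS) (hst hxS hyS)
      (hst hzS hyS) hxzne hxyne (Ne.symm hyzne) haL haP hxP hzP hyP px pz py
      (by omega) (by omega) hpx hpz hpy)
  · exact hTheta (theta_of_three_goods P haz hax hay (hst hzS hxS) (hst hzS hyS)
      (hst hxS hyS) (Ne.symm hxzne) (Ne.symm hyzne) hxyne haL haP hzP hxP hyP pz px py
      (by omega) (by omega) hpz hpx hpy)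
  · exact hTheta (theta_of_three_goods P hay hax haz (hst hyS hxS) (hst hyS hzS)
      (hst hxS hzS) (Ne.symm hxyne) hyzne hxzne haL haP hyP hxP hzP py px pz
      (by omega) (by omega) hpy hpx hpz)
  · exact hTheta (theta_of_three_goods P hay haz hax (hst hyS hzS) (hst hyS hxS)
      (hst hzS hxS) hyzne (Ne.symm hxyne) (Ne.symm hxzne) haL haP hyP hzP hxP py pz px
      (by omega) (by omega) hpy hpz hpx)
  · omega
  · exact hTheta (theta_of_three_goods P haz hay hax (hst hzS hyS) (hst hzS hxS)
      (hst hyS hxS) (Ne.symm hyzne) (Ne.symm hxzne) (Ne.symm hxyne) haL haP hzP hyP hxP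
      pz py px (by omega) (by omega) hpz hpy hpx)

end Helpers5
section Helpers6

variable {V : Type} {G : SimpleGraph V}

lemma conflict_card_le [Fintype V] {s l t : ℕ} (hTheta : ¬ HasTheta G)
    (hfree : G.CliqueFree t) (ht : 1 ≤ t) (P : Palanquin G s l) {x y : V}
    (hx : x ∈ P.S) (hy : y ∈ P.S) (hxy : x ≠ y) (T : Finset (Fin l))
    (hmem' : ∀ i ∈ T, ∃ u ∈ (P.L i).support, G.Adj x u ∧ G.Adj y u) :
    T.card ≤ t - 1 := by
  classical
  have hmem : ∀ i ∈ T, ∃ u, u ∈ (P.L i).support ∧ G.Adj x u ∧ G.Adj y u := by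
    intro i hi
    simpa using hmem' i hi
  have : Nonempty V := ⟨x⟩
  choose! u hu1 hu2 hu3 using hmem
  have hninj : Set.InjOn u (↑T : Set (Fin l)) := by
    intro i hi j hj hij
    by_contra hne
    exact Set.disjoint_left.mp (P.disj i j hne) (hu1 i hi) (hij ▸ hu1 j hj)
  have hnadj : ∀ i ∈ T, ¬ G.Adj P.a (u i) := fun i hi => P.anti i _ (hu1 i hi)
  have hane : ∀ i ∈ T, P.a ≠ u i := by
    intro i hi he
    exact Set.disjoint_left.mp (P.avoid i) (he ▸ hu1 i hi) (Set.mem_insert _ _)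
  have hclique : G.IsClique ↑(T.image u) := by
    intro v hv w hw hvw
    simp only [Finset.coe_image, Set.mem_image, Finset.mem_coe] at hv hw
    obtain ⟨i, hi, rfl⟩ := hv
    obtain ⟨j, hj, rfl⟩ := hw
    have hij : i ≠ j := fun h => hvw (h ▸ rfl)
    by_contra hnot
    refine hTheta (theta_of_common hxy (P.stable x hx y hy) (P.sub hx) (P.sub hy)
      (hu2 i hi) (hu3 i hi) (hu2 j hj) (hu3 j hj) (hnadj i hi) (hnadj j hj) hnot
      (hane i hi) (hane j hj) hvw)
  have hcard : (T.image u).card = T.card := Finset.card_image_of_injOn hninj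
  by_contra hc
  push_neg at hc
  have htle : t ≤ (T.image u).card := by omega
  obtain ⟨C, hCsub, hCcard⟩ := Finset.exists_subset_card_eq htle
  exact hfree C ⟨hclique.subset (Finset.coe_subset.mpr hCsub), hCcard⟩

lemma halving [Fintype V] {l : ℕ} (H : Fin l → Set V) (p : ℕ) (J : Finset (Fin l)) :
    ∀ (S' : Finset V),
      (∀ i ∈ J, ∀ x ∈ S', BadFor G (H i) x ∨ UglyFor G (H i) x) →
      2 ^ J.card * p ≤ S'.card →
      ∃ S₁ ⊆ S', p ≤ S₁.card ∧
        ∀ i ∈ J, (∀ x ∈ S₁, BadFor G (H i) x) ∨ (∀ x ∈ S₁, UglyFor G (H i) x) := by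
  classical
  induction J using Finset.induction_on with
  | empty =>
    intro S' _ hcard
    exact ⟨S', Finset.Subset.refl _, by simpa using hcard, by simp⟩
  | @insert a J haJ ih =>
    intro S' hbu hcard
    rw [Finset.card_insert_of_notMem haJ, pow_succ] at hcard
    set Sb := S'.filter (fun x => BadFor G (H a) x) with hSb
    set Su := S'.filter (fun x => ¬ BadFor G (H a) x) with hSu
    have hsplit : Sb.card + Su.card = S'.card := Finset.card_filter_add_card_filter_not _
    have hbig : 2 ^ J.card * p ≤ Sb.card ∨ 2 ^ J.card * p ≤ Su.card := by
      have hr : 2 ^ J.card * 2 * p = 2 * (2 ^ J.card * p) := by ring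
      omega
    rcases hbig with hbig | hbig
    · obtain ⟨S₁, hsub, hpc, hprop⟩ := ih Sb
        (fun i hi x hx => hbu i (Finset.mem_insert_of_mem hi) x (Finset.filter_subset _ _ hx))
        hbig
      refine ⟨S₁, hsub.trans (Finset.filter_subset _ _), hpc, ?_⟩
      intro i hi
      rcases Finset.mem_insert.mp hi with rfl | hi
      · exact Or.inl fun x hx => (Finset.mem_filter.mp (hsub hx)).2
      · exact hprop i hi
    · obtain ⟨S₁, hsub, hpc, hprop⟩ := ih Su
        (fun i hi x hx => hbu i (Finset.mem_insert_of_mem hi) x (Finset.filter_subset _ _ hx))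
        hbig
      refine ⟨S₁, hsub.trans (Finset.filter_subset _ _), hpc, ?_⟩
      intro i hi
      rcases Finset.mem_insert.mp hi with rfl | hi
      · refine Or.inr fun x hx => ?_
        have h1 := (Finset.mem_filter.mp (hsub hx)).2
        have h2 := hbu i (Finset.mem_insert_self _ _) x
          (Finset.filter_subset _ _ (hsub hx))
        tauto
      · exact hprop i hi

end Helpers6

section Helpers

open Classical

/-- in a (theta, K_t)-free graph, every
`(2^q·p + 2q, (2^q·p + 2q)²·t³ + q)`-palanquin `(a, S, ℒ)` admits `S₁ ⊆ S` of size `p` and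
`ℒ₁ ⊆ ℒ` of size `q` such that for every `L ∈ ℒ₁`, no two vertices of `S₁` have a common
neighbor in `L`, and either all vertices of `S₁` are `L`-bad or all are `L`-ugly. -/
theorem statement_12 (p q t : ℕ) (hp : 1 ≤ p) (hq : 1 ≤ q) (ht : 1 ≤ t)
    {V : Type} [Fintype V] (G : SimpleGraph V)
    (hTheta : ¬ HasTheta G) (hfree : G.CliqueFree t)
    (P : Palanquin G (2 ^ q * p + 2 * q) ((2 ^ q * p + 2 * q) ^ 2 * t ^ 3 + q)) :
    ∃ S₁ ⊆ P.S, S₁.ncard = p ∧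
      ∃ I : Finset (Fin ((2 ^ q * p + 2 * q) ^ 2 * t ^ 3 + q)), I.card = q ∧
        ∀ i ∈ I,
          (∀ x ∈ S₁, ∀ y ∈ S₁, x ≠ y →
            ¬ ∃ u ∈ (P.L i).support, G.Adj x u ∧ G.Adj y u) ∧
          ((∀ x ∈ S₁, BadFor G (P.L i).support x) ∨
            (∀ x ∈ S₁, UglyFor G (P.L i).support x)) := by
  classical
  have hScard : P.S.toFinset.card = 2 ^ q * p + 2 * q := by
    rw [← Set.ncard_eq_toFinset_card']; exact P.card
  -- the set of "conflict" paths, on which two vertices of S have a common neighbour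
  set Conf : Finset (Fin ((2 ^ q * p + 2 * q) ^ 2 * t ^ 3 + q)) :=
    Finset.univ.filter fun i => ∃ x ∈ P.S, ∃ y ∈ P.S, x ≠ y ∧
      ∃ u ∈ (P.L i).support, G.Adj x u ∧ G.Adj y u with hConf
  have hsubC : Conf ⊆ (P.S.toFinset ×ˢ P.S.toFinset).biUnion (fun xy =>
      Finset.univ.filter fun i => xy.1 ≠ xy.2 ∧
        ∃ u ∈ (P.L i).support, G.Adj xy.1 u ∧ G.Adj xy.2 u) := by
    intro i hi
    simp only [hConf, Finset.mem_filter, Finset.mem_univ, true_and] at hi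
    obtain ⟨x, hx, y, hy, hxy, hu⟩ := hi
    refine Finset.mem_biUnion.mpr ⟨(x, y), Finset.mem_product.mpr
      ⟨Set.mem_toFinset.mpr hx, Set.mem_toFinset.mpr hy⟩, ?_⟩
    simp only [Finset.mem_filter, Finset.mem_univ, true_and]
    exact ⟨hxy, hu⟩
  have hConfcard : Conf.card ≤ (2 ^ q * p + 2 * q) ^ 2 * t ^ 3 := by
    have h1 : Conf.card ≤
        ∑ xy ∈ P.S.toFinset ×ˢ P.S.toFinset, (t - 1) := by
      refine (Finset.card_le_card hsubC).trans (Finset.card_biUnion_le.trans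
        (Finset.sum_le_sum fun xy hxy => ?_))
      by_cases hexy : xy.1 = xy.2
      · have : (Finset.univ.filter fun i => xy.1 ≠ xy.2 ∧
            ∃ u ∈ (P.L i).support, G.Adj xy.1 u ∧ G.Adj xy.2 u) = ∅ := by
          refine Finset.eq_empty_of_forall_notMem fun i hi => ?_
          exact ((Finset.mem_filter.mp hi).2).1 hexy
        simp [this]
      · have hmemS := Finset.mem_product.mp hxy
        exact conflict_card_le hTheta hfree ht P
          (Set.mem_toFinset.mp hmemS.1) (Set.mem_toFinset.mp hmemS.2) hexy _
          (fun i hi => ((Finset.mem_filter.mp hi).2).2)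
    rw [Finset.sum_const, Finset.card_product, hScard, smul_eq_mul] at h1
    have h2 : t - 1 ≤ t ^ 3 := by
      have := Nat.le_self_pow (by norm_num : (3:ℕ) ≠ 0) t
      omega
    calc Conf.card ≤ (2 ^ q * p + 2 * q) * (2 ^ q * p + 2 * q) * (t - 1) := h1
      _ = (2 ^ q * p + 2 * q) ^ 2 * (t - 1) := by ring
      _ ≤ (2 ^ q * p + 2 * q) ^ 2 * t ^ 3 := Nat.mul_le_mul_left _ h2
  have hcompl : q ≤ Confᶜ.card := by
    rw [Finset.card_compl, Fintype.card_fin]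
    omega
  obtain ⟨I, hIsub, hIcard⟩ := Finset.exists_subset_card_eq hcompl
  have hclean : ∀ i ∈ I, ∀ x ∈ P.S, ∀ y ∈ P.S, x ≠ y →
      ¬ ∃ u ∈ (P.L i).support, G.Adj x u ∧ G.Adj y u := by
    intro i hi x hx y hy hxy hcom
    have hni : i ∉ Conf := Finset.mem_compl.mp (hIsub hi)
    exact hni (by
      simp only [hConf, Finset.mem_filter, Finset.mem_univ, true_and]
      exact ⟨x, hx, y, hy, hxy, hcom⟩)
  -- remove the good vertices
  set Bd : Finset V := P.S.toFinset.filter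
    (fun x => ∃ i ∈ I, GoodFor G (P.L i).support x) with hBd
  have hBdcard : Bd.card ≤ 2 * q := by
    have hsubB : Bd ⊆ I.biUnion (fun i =>
        P.S.toFinset.filter fun x => GoodFor G (P.L i).support x) := by
      intro x hx
      obtain ⟨hxS, i, hi, hgood⟩ := Finset.mem_filter.mp hx
      exact Finset.mem_biUnion.mpr ⟨i, hi, Finset.mem_filter.mpr ⟨hxS, hgood⟩⟩
    refine (Finset.card_le_card hsubB).trans (Finset.card_biUnion_le.trans ?_)
    have hone : ∀ i ∈ I,
        (P.S.toFinset.filter fun x => GoodFor G (P.L i).support x).card ≤ 2 := by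
      intro i hi
      have hcoe : (↑(P.S.toFinset.filter fun x => GoodFor G (P.L i).support x) : Set V)
          = {x ∈ P.S | GoodFor G (P.L i).support x} := by
        ext v; simp
      have heq : (P.S.toFinset.filter fun x => GoodFor G (P.L i).support x).card
          = {x ∈ P.S | GoodFor G (P.L i).support x}.ncard := by
        rw [← Set.ncard_coe_finset, hcoe]
      rw [heq]
      exact goods_le_two hTheta P.sub P.stable (P.L i) (P.avoid i) (P.anti i)
        (hclean i hi)
    calc (∑ i ∈ I, (P.S.toFinset.filter fun x => GoodFor G (P.L i).support x).card)
        ≤ ∑ i ∈ I, 2 := Finset.sum_le_sum hone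
      _ = 2 * q := by rw [Finset.sum_const, hIcard, smul_eq_mul, Nat.mul_comm]
  set S₀ : Finset V := P.S.toFinset \ Bd with hS₀
  have hS₀card : 2 ^ q * p ≤ S₀.card := by
    have h : S₀.card = P.S.toFinset.card - Bd.card :=
      Finset.card_sdiff_of_subset (Finset.filter_subset _ _)
    omega
  have hS₀S : ∀ x ∈ S₀, x ∈ P.S := by
    intro x hx
    exact Set.mem_toFinset.mp (Finset.mem_sdiff.mp hx).1
  have hbadugly : ∀ i ∈ I, ∀ x ∈ S₀,
      BadFor G (P.L i).support x ∨ UglyFor G (P.L i).support x := by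
    intro i hi x hx
    have hxS := hS₀S x hx
    have hnotgood : ¬ GoodFor G (P.L i).support x := by
      intro hgood
      exact (Finset.mem_sdiff.mp hx).2
        (Finset.mem_filter.mpr ⟨Set.mem_toFinset.mpr hxS, i, hi, hgood⟩)
    obtain ⟨u, hu, hadj⟩ := P.nbr x hxS i
    have hne : (NbrsIn G (P.L i).support x).Nonempty := ⟨u, hu, hadj⟩
    have h1 : 0 < (NbrsIn G (P.L i).support x).ncard :=
      (Set.ncard_pos (Set.toFinite _)).mpr hne
    have h2 : 2 ≤ (NbrsIn G (P.L i).support x).ncard := by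
      rcases Nat.lt_or_ge (NbrsIn G (P.L i).support x).ncard 2 with h | h
      · exact absurd (by omega : (NbrsIn G (P.L i).support x).ncard = 1) hnotgood
      · exact h
    by_cases hcl : G.IsClique (NbrsIn G (P.L i).support x)
    · exact Or.inl ⟨hcl, h2⟩
    · exact Or.inr hcl
  obtain ⟨S₁, hS₁sub, hS₁card, hS₁prop⟩ :=
    halving (fun i => (P.L i).support) p I S₀
      (fun i hi x hx => hbadugly i hi x hx)
      (by rw [hIcard]; exact hS₀card)
  obtain ⟨S₂, hS₂sub, hS₂card⟩ := Finset.exists_subset_card_eq hS₁card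
  refine ⟨↑S₂, ?_, ?_, I, hIcard, ?_⟩
  · intro x hx
    exact hS₀S x (hS₁sub (hS₂sub hx))
  · rw [Set.ncard_coe_finset, hS₂card]
  · intro i hi
    constructor
    · intro x hx y hy hxy
      exact hclean i hi x (hS₀S x (hS₁sub (hS₂sub hx))) y (hS₀S y (hS₁sub (hS₂sub hy))) hxy
    · rcases hS₁prop i hi with h | h
      · exact Or.inl fun x hx => h x (hS₂sub hx)
      · exact Or.inr fun x hx => h x (hS₂sub hx)
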